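/- Let f(t) = t^m − a ∈ F[t] ⊂ R = D[t;σ] with m > 1, and set L = Nuc_r(S_f) ∩ D. Then Nuc_r(S_f) = L ⊕ Lt ⊕ ⋯ ⊕ Lt^{m-1} = L[t;σ|_L]/L[t;σ|_L]f(t); that is, a polynomial g(t) = ∑_{i=0}^{m-1} g_i t^i of degree < m lies in Nuc_r(S_f) if and only if g_i ∈ L for all i. -/

import Mathlib

/-- `g` right-divides `f`, i.e. `f ∈ Rg`. -/
def RDvd {R : Type} [Ring R] (g f : R) : Prop := ∃ q : R, f = q * g

/-- `f` is right-invariant : `f·R ⊆ R·f`. -/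
def RightInvariant {R : Type} [Ring R] (f : R) : Prop := ∀ r : R, ∃ q : R, f * r = q * f

/-- `(f, g)_r = 1`: the only common right divisors of `f` and `g` are units. -/
def RightCoprimeWith {R : Type} [Ring R] (f g : R) : Prop :=
  ∀ e : R, RDvd e f → RDvd e g → IsUnit e

/-- `f` and `g` are similar: `R/Rf ≅ R/Rg` as left `R`-modules. -/
def SimilarP {R : Type} [Ring R] (f g : R) : Prop :=
  Nonempty ((R ⧸ (Submodule.span R {f})) ≃ₗ[R] (R ⧸ (Submodule.span R {g})))

/-- `b` is a bound of `f`: `b` is right-invariant, `f` right-divides `b`, and `Rb` is the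
largest two-sided ideal contained in `Rf`. -/
def IsBound {R : Type} [Ring R] (f b : R) : Prop :=
  b ≠ 0 ∧ RightInvariant b ∧ RDvd f b ∧
    ∀ g : R, g ≠ 0 → RightInvariant g → RDvd f g → RDvd b g

/-- Data witnessing that the ring `R` is a skew polynomial ring `D[t;sigma,delta]`:
`iota` embeds the coefficients, `t` is the indeterminate with `t*a = sigma(a)*t + delta(a)`,
every element has a unique finite coefficient representation, and `rmod g f` is the
remainder of `g` upon right division by `f`. -/
structure SkewPolyData (D : Type) [DivisionRing D] (σ : D →+* D) (δ : D → D)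
    (R : Type) [Ring R] where
  ι : D →+* R
  t : R
  coeff : R → (ℕ →₀ D)
  rmod : R → R → R
  t_mul : ∀ a : D, t * ι a = ι (σ a) * t + ι (δ a)
  sum_coeff : ∀ x : R, ((coeff x).sum fun i a => ι a * t ^ i) = x
  coeff_sum : ∀ c : ℕ →₀ D, coeff (c.sum fun i a => ι a * t ^ i) = c
  rmod_spec : ∀ g f : R, f ≠ 0 →
    (∃ q : R, g = q * f + rmod g f) ∧
      (coeff (rmod g f)).support.max < (coeff f).support.max

namespace SkewPolyData

variable {D : Type} [DivisionRing D] {σ : D →+* D} {δ : D → D}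
variable {R : Type} [Ring R] (S : SkewPolyData D σ δ R)

/-- The degree of a skew polynomial (`⊥` for `0`). -/
noncomputable def deg (x : R) : WithBot ℕ := (S.coeff x).support.max

/-- `f` is monic of degree `m`. -/
def MonicDeg (f : R) (m : ℕ) : Prop := S.coeff f m = 1 ∧ S.deg f = (m : WithBot ℕ)

/-- `f` is irreducible in `R`: it is non-constant and is not a product of two
polynomials of strictly smaller degree. -/
def Irred (f : R) : Prop :=
  (1 : WithBot ℕ) ≤ S.deg f ∧
    ∀ g h : R, f = g * h → S.deg g < S.deg f → S.deg h < S.deg f → False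

/-- multiplication in the Petit algebra `S_f` (on representatives in `R`). -/
def pmul (f a b : R) : R := S.rmod (a * b) f

/-- the underlying set of the Petit algebra `S_f`: polynomials of degree `< deg f`. -/
def carr (f : R) : Set R := {x : R | S.deg x < S.deg f}

/-- the right nucleus of the Petit algebra `S_f`. -/
def NucR (f : R) : Set R :=
  {x : R | x ∈ S.carr f ∧ ∀ a ∈ S.carr f, ∀ b ∈ S.carr f,
    S.pmul f (S.pmul f a b) x = S.pmul f a (S.pmul f b x)}

/-- the nucleus (left ∩ middle ∩ right) of the Petit algebra `S_f`. -/
def NucAll (f : R) : Set R :=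
  {x : R | x ∈ S.carr f ∧
    (∀ a ∈ S.carr f, ∀ b ∈ S.carr f,
      S.pmul f (S.pmul f x a) b = S.pmul f x (S.pmul f a b)) ∧
    (∀ a ∈ S.carr f, ∀ b ∈ S.carr f,
      S.pmul f (S.pmul f a x) b = S.pmul f a (S.pmul f x b)) ∧
    (∀ a ∈ S.carr f, ∀ b ∈ S.carr f,
      S.pmul f (S.pmul f a b) x = S.pmul f a (S.pmul f b x))}

/-- the eigenring `E(f)` of `f`, as the set of its canonical representatives
(polynomials of degree `< deg f` with `f·g ∈ Rf`), with multiplication `pmul f`. -/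
def EigR (f : R) : Set R :=
  {x : R | S.deg x < S.deg f ∧ ∃ q : R, f * x = q * f}

/-- evaluation of a polynomial with coefficients in the subfield `K` of `D`
at the (central) element `x₀` of `R`. -/
noncomputable def ceval (K : Subfield D) (x₀ : R) (p : Polynomial K) : R :=
  Polynomial.eval₂ (S.ι.comp K.subtype) x₀ p

/-- `h = p(x₀)` is the minimal central left multiple of `f`: `p ∈ K[x]` is monic of
minimal degree such that `f` right-divides `p(x₀)`, and `h = p(x₀)`. -/
def IsMclm (K : Subfield D) (x₀ : R) (f h : R) (p : Polynomial K) : Prop :=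
  p.Monic ∧ h = S.ceval K x₀ p ∧ RDvd f h ∧
    ∀ q : Polynomial K, q.Monic → RDvd f (S.ceval K x₀ q) → p.degree ≤ q.degree

/-- the subset `X` of `R` has a basis of size `N` over the set of coefficients `Fc ⊆ D`. -/
def RelDimR (Fc : Set D) (X : Set R) (N : ℕ) : Prop :=
  ∃ b : Fin N → R, (∀ i, b i ∈ X) ∧
    ∀ x ∈ X, ∃! cf : Fin N → D, (∀ i, cf i ∈ Fc) ∧ x = ∑ i, S.ι (cf i) * b i

/-- `ψ` restricts to an isomorphism of the subset `X` of the Petit algebra `S_f`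
(with multiplication `∘_f`) onto the ring `B`. -/
def SubMulIso (f : R) (X : Set R) (B : Type) [Ring B] (ψ : R → B) : Prop :=
  Set.BijOn ψ X Set.univ ∧ ψ 1 = 1 ∧
    ∀ x ∈ X, ∀ y ∈ X,
      ψ (x + y) = ψ x + ψ y ∧ ψ (S.pmul f x y) = ψ x * ψ y

end SkewPolyData

/-- the subset `X ⊆ D` has a basis of size `N` over the set of coefficients `Fc ⊆ D`. -/
def RelDimD {D : Type} [DivisionRing D] (Fc X : Set D) (N : ℕ) : Prop :=
  ∃ b : Fin N → D, (∀ i, b i ∈ X) ∧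
    ∀ x ∈ X, ∃! cf : Fin N → D, (∀ i, cf i ∈ Fc) ∧ x = ∑ i, cf i * b i

theorem deltaZero {D : Type} [DivisionRing D] {δ : D → D}
    (hadd : ∀ x y : D, δ (x + y) = δ x + δ y) : δ 0 = 0 := by
  have h := hadd 0 0
  rw [add_zero] at h
  exact add_left_cancel (by rw [add_zero]; exact h.symm)

theorem deltaOne {D : Type} [DivisionRing D] {σ : D →+* D} {δ : D → D}
    (hleib : ∀ x y : D, δ (x * y) = σ x * δ y + δ x * y) : δ 1 = 0 := by
  have h := hleib 1 1
  rw [mul_one, map_one, one_mul, mul_one] at h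
  exact add_left_cancel (by rw [add_zero]; exact h.symm)

/-- the subfield `F = C ∩ Fix(σ) ∩ Const(δ)` of `D`. -/
def ctrSubfield {D : Type} [DivisionRing D] (σ : D →+* D) (δ : D → D)
    (hadd : ∀ x y : D, δ (x + y) = δ x + δ y)
    (hleib : ∀ x y : D, δ (x * y) = σ x * δ y + δ x * y) : Subfield D where
  carrier := {a : D | a ∈ Set.center D ∧ σ a = a ∧ δ a = 0}
  zero_mem' := ⟨Set.zero_mem_center, map_zero σ, deltaZero hadd⟩
  one_mem' := ⟨Set.one_mem_center, map_one σ, deltaOne (σ := σ) hleib⟩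
  add_mem' := fun ha hb =>
    ⟨Set.add_mem_center ha.1 hb.1, by rw [map_add, ha.2.1, hb.2.1],
      by rw [hadd, ha.2.2, hb.2.2, add_zero]⟩
  mul_mem' := fun ha hb =>
    ⟨Set.mul_mem_center ha.1 hb.1, by rw [map_mul, ha.2.1, hb.2.1],
      by rw [hleib, ha.2.2, hb.2.2, mul_zero, zero_mul, add_zero]⟩
  neg_mem' := fun {a} ha => by
    refine ⟨Set.neg_mem_center ha.1, by rw [map_neg, ha.2.1], ?_⟩
    have h := hadd a (-a)
    rw [add_neg_cancel, deltaZero hadd, ha.2.2, zero_add] at h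
    exact h.symm
  inv_mem' := fun a ha => by
    refine ⟨Set.inv_mem_center ha.1, by rw [map_inv₀, ha.2.1], ?_⟩
    by_cases h : a = 0
    · rw [h, inv_zero]; exact deltaZero hadd
    · have hl := hleib a a⁻¹
      rw [mul_inv_cancel₀ h, deltaOne (σ := σ) hleib, ha.2.2, zero_mul, add_zero] at hl
      rcases mul_eq_zero.mp hl.symm with h1 | h2
      · exact absurd (σ.injective (by rw [h1, map_zero])) h
      · exact h2


/-- `B` is a central algebra of degree `s` over the quotient `K[x]/(P)`:
there is a homomorphism `χ : K[x] →+* B` with kernel `(P)` whose range is the center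
of `B`, and `B` has a basis of size `s²` over the center, with coefficients
unique modulo `P`. -/
def IsCentralAlgModOfDeg {K : Type} [DivisionRing K] (P : Polynomial K)
    (B : Type) [Ring B] (s : ℕ) : Prop :=
  ∃ χ : Polynomial K →+* B, (∀ q : Polynomial K, χ q = 0 ↔ P ∣ q) ∧
    Set.range ⇑χ = Set.center B ∧
    ∃ bb : Fin (s * s) → B, ∀ x : B,
      ∃ cf : Fin (s * s) → Polynomial K, x = ∑ i, χ (cf i) * bb i ∧
        ∀ cf' : Fin (s * s) → Polynomial K,
          x = ∑ i, χ (cf' i) * bb i → ∀ i, P ∣ (cf i - cf' i)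

/-- `B` is a (finite-dimensional) central simple algebra over the field `K`. -/
def CentralSimpleOver (K : Type) [DivisionRing K] (B : Type) [Ring B] : Prop :=
  IsSimpleRing B ∧ ∃ χ : K →+* B, Function.Injective ⇑χ ∧ Set.range ⇑χ = Set.center B ∧
    ∃ (N : ℕ) (bb : Fin N → B), ∀ x : B, ∃! cf : Fin N → K, x = ∑ i, χ (cf i) * bb i

/-- The maps `Δ_{j,i}` associated with `(σ, δ)`. -/
def Delta {D : Type} [DivisionRing D] (σ : D →+* D) (δ : D → D) : ℕ → ℕ → D → D
  | 0, 0 => id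
  | 0, _ + 1 => fun _ => 0
  | j + 1, 0 => fun a => δ (Delta σ δ j 0 a)
  | j + 1, i + 1 => fun a => δ (Delta σ δ j (i + 1) a) + σ (Delta σ δ j i a)

/-- `χ` realises an isomorphism from the commutative quotient `K[x]/(P)` onto the
subset `X` of the Petit algebra `S_f` (with multiplication `∘_f`). -/
def QuotMulIso {D : Type} [DivisionRing D] {σ : D →+* D} {δ : D → D} {R : Type} [Ring R]
    (S : SkewPolyData D σ δ R) (f : R) (X : Set R) (K : Subfield D)
    (P : Polynomial ↥K) (χ : Polynomial ↥K → R) : Prop :=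
  (∀ q, χ q ∈ X) ∧ χ 1 = 1 ∧ (∀ q r, χ (q + r) = χ q + χ r) ∧
    (∀ q r, χ (q * r) = S.pmul f (χ q) (χ r)) ∧
    (∀ x ∈ X, ∃ q, χ q = x) ∧ (∀ q, χ q = 0 ↔ P ∣ q)

/-- A description of the right nucleus of the Petit algebra `S_f` as a central division
algebra `B` of degree `s` over `E = K[x]/(P)`, together with a ring isomorphism
`R/Rh ≅ M_k(Nuc_r(S_f))` (given by a surjective ring homomorphism with kernel `Rh`). -/
structure NucCDADesc {D : Type} [DivisionRing D] {σ : D →+* D} {δ : D → D}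
    {R : Type} [Ring R] (S : SkewPolyData D σ δ R)
    (f h : R) (K : Subfield D) (P : Polynomial ↥K) (s k : ℕ) where
  B : Type
  [instB : DivisionRing B]
  ψ : R → B
  hψ : S.SubMulIso f (S.NucR f) B ψ
  hcda : IsCentralAlgModOfDeg P B s
  Φ : R →+* Matrix (Fin k) (Fin k) B
  hΦ : Function.Surjective ⇑Φ
  hker : ∀ x : R, Φ x = 0 ↔ ∃ q : R, x = q * h

/-- A description of the eigenring of an irreducible divisor `g` of `h` as a central
division algebra `B` of degree `sp` over `E = K[x]/(P)`, with `R/Rh ≅ M_k(B)` and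
`Nuc_r(S_f) ≅ M_l(B)` a central simple algebra of degree `l·sp` over `E`. -/
structure EigCDADesc {D : Type} [DivisionRing D] {σ : D →+* D} {δ : D → D}
    {R : Type} [Ring R] (S : SkewPolyData D σ δ R)
    (f h g : R) (K : Subfield D) (P : Polynomial ↥K) (l k sp : ℕ) where
  B : Type
  [instB : DivisionRing B]
  ψg : R → B
  hψg : S.SubMulIso g (S.EigR g) B ψg
  hcda : IsCentralAlgModOfDeg P B sp
  Φ : R →+* Matrix (Fin k) (Fin k) B
  hΦ : Function.Surjective ⇑Φ
  hker : ∀ x : R, Φ x = 0 ↔ ∃ q : R, x = q * h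
  ψ : R → Matrix (Fin l) (Fin l) B
  hψ : S.SubMulIso f (S.NucR f) (Matrix (Fin l) (Fin l) B) ψ
  hcsa : IsCentralAlgModOfDeg P (Matrix (Fin l) (Fin l) B) (l * sp)
  hsimple : IsSimpleRing (Matrix (Fin l) (Fin l) B)

/-- A description of the eigenring of `f` as a central simple algebra over the field `K`. -/
structure CSADesc {D : Type} [DivisionRing D] {σ : D →+* D} {δ : D → D}
    {R : Type} [Ring R] (S : SkewPolyData D σ δ R) (f : R) (K : Subfield D) where
  B : Type
  [instB : Ring B]
  ψ : R → B
  hψ : S.SubMulIso f (S.EigR f) B ψ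
  hcsa : CentralSimpleOver ↥K B

/-- A description of `R/Rh` as a semisimple Artinian ring, direct sum of the simple
Artinian rings `R/Rπᵢ`, of the decomposition of `R/Rf` into simple modules, and of
the right nucleus of `S_f` as `⊕ᵢ M_{rsᵢ}(E(fiᵢ))`. -/
structure SemisimpleDesc {D : Type} [DivisionRing D] {σ : D →+* D} {δ : D → D}
    {R : Type} [Ring R] (S : SkewPolyData D σ δ R)
    (f h : R) (z : ℕ) (π : Fin z → R) (fi : Fin z → R) (rs : Fin z → ℕ) where
  A : Fin z → Type
  [instA : ∀ i, Ring (A i)]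
  φ : ∀ i, R →+* A i
  hφsurj : ∀ i, Function.Surjective ⇑(φ i)
  hφker : ∀ i, ∀ x : R, φ i x = 0 ↔ ∃ q : R, x = q * π i
  hsimpleA : ∀ i, IsSimpleRing (A i)
  hartA : ∀ i, IsArtinianRing (A i)
  hss : IsSemisimpleRing ((i : Fin z) → A i)
  hart : IsArtinianRing ((i : Fin z) → A i)
  hPisurj : Function.Surjective ⇑(Pi.ringHom φ)
  hPiker : ∀ x : R, Pi.ringHom φ x = 0 ↔ ∃ q : R, x = q * h
  modIso : (R ⧸ (Submodule.span R {f})) ≃ₗ[R]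
      ((i : Fin z) → Fin (rs i) → (R ⧸ (Submodule.span R {fi i})))
  B : Fin z → Type
  [instB : ∀ i, Ring (B i)]
  ψg : ∀ i, R → B i
  hψg : ∀ i, S.SubMulIso (fi i) (S.EigR (fi i)) (B i) (ψg i)
  Ψ : R → ((i : Fin z) → Matrix (Fin (rs i)) (Fin (rs i)) (B i))
  hΨ : S.SubMulIso f (S.NucR f) ((i : Fin z) → Matrix (Fin (rs i)) (Fin (rs i)) (B i)) Ψ
  hssNuc : IsSemisimpleRing ((i : Fin z) → Matrix (Fin (rs i)) (Fin (rs i)) (B i))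
  hartNuc : IsArtinianRing ((i : Fin z) → Matrix (Fin (rs i)) (Fin (rs i)) (B i))

/-- the subfield `F = C ∩ Fix(σ)` of `D` (for `δ = 0`). -/
def fixC {D : Type} [DivisionRing D] (σ : D →+* D) : Subfield D :=
  ctrSubfield σ (fun _ => 0) (fun _ _ => by simp) (fun _ _ => by simp)

/-- the subfield `F = C ∩ Const(δ)` of `D` (for `σ = id`). -/
def constC {D : Type} [DivisionRing D] (δ : D → D)
    (hadd : ∀ x y : D, δ (x + y) = δ x + δ y)
    (hleib : ∀ x y : D, δ (x * y) = x * δ y + δ x * y) : Subfield D :=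
  ctrSubfield (RingHom.id D) δ hadd (fun x y => by simpa using hleib x y)


section PetitAux

set_option linter.unusedSectionVars false
set_option linter.unnecessarySimpa false

open Finsupp

namespace PetitAux

variable {D R : Type} [DivisionRing D] [Ring R] {σ : D →+* D}
variable (S : SkewPolyData D σ (fun _ => 0) R)

/-- reconstruction of an element from its coefficients -/
def fromC (c : ℕ →₀ D) : R := c.sum fun i a => S.ι a * S.t ^ i

theorem fromC_zero : fromC S 0 = 0 := Finsupp.sum_zero_index

theorem fromC_add (c d : ℕ →₀ D) : fromC S (c + d) = fromC S c + fromC S d :=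
  Finsupp.sum_add_index (by simp) (by intro i _ b₁ b₂; rw [map_add, add_mul])

/-- `fromC` as an additive monoid hom -/
def fromCHom : (ℕ →₀ D) →+ R where
  toFun := fromC S
  map_zero' := fromC_zero S
  map_add' := fromC_add S

theorem coeff_fromC (c : ℕ →₀ D) : S.coeff (fromC S c) = c := S.coeff_sum c

theorem fromC_coeff (x : R) : fromC S (S.coeff x) = x := S.sum_coeff x

theorem coeff_zero : S.coeff 0 = 0 := by
  have := coeff_fromC S 0
  rwa [fromC_zero] at this

theorem coeff_add (x y : R) : S.coeff (x + y) = S.coeff x + S.coeff y := by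
  have h : fromC S (S.coeff x + S.coeff y) = x + y := by
    rw [fromC_add, fromC_coeff, fromC_coeff]
  rw [← h, coeff_fromC]

/-- `coeff` as an additive monoid hom -/
def coeffHom : R →+ (ℕ →₀ D) where
  toFun := S.coeff
  map_zero' := coeff_zero S
  map_add' := coeff_add S

theorem coeff_sub (x y : R) : S.coeff (x - y) = S.coeff x - S.coeff y :=
  map_sub (coeffHom S) x y

theorem fromC_single (i : ℕ) (c : D) :
    fromC S (Finsupp.single i c) = S.ι c * S.t ^ i :=
  Finsupp.sum_single_index (by simp)

theorem coeff_mono (i : ℕ) (c : D) :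
    S.coeff (S.ι c * S.t ^ i) = Finsupp.single i c := by
  rw [← fromC_single, coeff_fromC]

theorem coeff_iota (c : D) : S.coeff (S.ι c) = Finsupp.single 0 c := by
  have := coeff_mono S 0 c
  rwa [pow_zero, mul_one] at this

include S in
theorem one_ne_zero' : (1 : R) ≠ 0 := by
  intro h
  have h1 : S.coeff (1 : R) = Finsupp.single 0 (1 : D) := by
    have := coeff_iota S (1 : D); rwa [map_one] at this
  rw [h, coeff_zero] at h1
  have h2 := DFunLike.congr_fun h1 0
  rw [Finsupp.single_eq_same] at h2
  simp at h2

theorem iota_inj : Function.Injective S.ι := by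
  intro c d h
  have h1 : Finsupp.single (0 : ℕ) c = Finsupp.single 0 d := by
    rw [← coeff_iota S c, ← coeff_iota S d, h]
  have h2 := DFunLike.congr_fun h1 0
  rwa [Finsupp.single_eq_same, Finsupp.single_eq_same] at h2

theorem fromC_eq_zero_iff (c : ℕ →₀ D) : fromC S c = 0 ↔ c = 0 := by
  constructor
  · intro h
    have := coeff_fromC S c
    rw [h, coeff_zero] at this
    exact this.symm
  · intro h; rw [h, fromC_zero]

theorem t_mul' (c : D) : S.t * S.ι c = S.ι (σ c) * S.t := by
  have := S.t_mul c
  simpa using this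

theorem t_pow_mul (j : ℕ) : ∀ c : D,
    S.t ^ j * S.ι c = S.ι (σ^[j] c) * S.t ^ j := by
  induction j with
  | zero => intro c; simp
  | succ n ih =>
    intro c
    rw [pow_succ, mul_assoc, t_mul', ← mul_assoc, ih (σ c), mul_assoc, ← pow_succ,
      ← Function.iterate_succ_apply]

theorem fromC_sum_single (c : ℕ →₀ D) (g : ℕ → ℕ) (v : ℕ → D → D) :
    fromC S (c.sum fun i d => Finsupp.single (g i) (v i d)) =
      c.sum fun i d => S.ι (v i d) * S.t ^ (g i) := by
  rw [show fromC S (c.sum fun i d => Finsupp.single (g i) (v i d)) =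
      fromCHom S (c.sum fun i d => Finsupp.single (g i) (v i d)) from rfl,
    map_finsuppSum]
  exact Finsupp.sum_congr fun i _ => fromC_single S (g i) (v i (c i))

theorem coeff_trans (c : ℕ →₀ D) (g : ℕ → ℕ) (v : ℕ → D → D) :
    S.coeff (c.sum fun i d => S.ι (v i d) * S.t ^ (g i)) =
      c.sum fun i d => Finsupp.single (g i) (v i d) := by
  rw [← fromC_sum_single, coeff_fromC]

theorem deg_eq (x : R) : S.deg x = (S.coeff x).support.max := rfl

theorem deg_zero : S.deg (0 : R) = ⊥ := by
  rw [deg_eq, coeff_zero]; simp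

theorem deg_lt_of {x : R} {μ : ℕ} (h : ∀ j ∈ (S.coeff x).support, j < μ) :
    S.deg x < (μ : WithBot ℕ) := by
  rw [deg_eq]
  cases h0 : (S.coeff x).support.max with
  | bot => exact WithBot.bot_lt_coe μ
  | coe j => exact WithBot.coe_lt_coe.2 (h j (Finset.mem_of_max h0))

theorem coeff_eq_zero_of_deg_lt {x : R} {μ : ℕ} (h : S.deg x < (μ : WithBot ℕ))
    {j : ℕ} (hj : μ ≤ j) : S.coeff x j = 0 := by
  by_contra hne
  have hjs : j ∈ (S.coeff x).support := Finsupp.mem_support_iff.2 hne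
  have h1 : (j : WithBot ℕ) ≤ S.deg x := Finset.le_max hjs
  have h2 : j < μ := WithBot.coe_lt_coe.1 (lt_of_le_of_lt h1 h)
  omega

theorem deg_add_lt {x y : R} {μ : ℕ} (hx : S.deg x < (μ : WithBot ℕ))
    (hy : S.deg y < (μ : WithBot ℕ)) : S.deg (x + y) < (μ : WithBot ℕ) := by
  apply deg_lt_of
  intro j hj
  by_contra hge
  push_neg at hge
  have : S.coeff (x + y) j = 0 := by
    rw [coeff_add, Finsupp.add_apply, coeff_eq_zero_of_deg_lt S hx hge,
      coeff_eq_zero_of_deg_lt S hy hge, add_zero]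
  exact (Finsupp.mem_support_iff.1 hj) this

theorem deg_sub_lt {x y : R} {μ : ℕ} (hx : S.deg x < (μ : WithBot ℕ))
    (hy : S.deg y < (μ : WithBot ℕ)) : S.deg (x - y) < (μ : WithBot ℕ) := by
  apply deg_lt_of
  intro j hj
  by_contra hge
  push_neg at hge
  have : S.coeff (x - y) j = 0 := by
    rw [coeff_sub, Finsupp.sub_apply, coeff_eq_zero_of_deg_lt S hx hge,
      coeff_eq_zero_of_deg_lt S hy hge, sub_zero]
  exact (Finsupp.mem_support_iff.1 hj) this

theorem deg_iota_lt {μ : ℕ} (hμ : 0 < μ) (c : D) :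
    S.deg (S.ι c) < (μ : WithBot ℕ) := by
  apply deg_lt_of
  intro j hj
  rw [coeff_iota] at hj
  have := Finsupp.support_single_subset hj
  simp only [Finset.mem_singleton] at this
  omega

theorem deg_tpow (i : ℕ) : S.deg (S.t ^ i) = (i : WithBot ℕ) := by
  have h : S.coeff (S.t ^ i) = Finsupp.single i (1 : D) := by
    have := coeff_mono S i (1 : D); rwa [map_one, one_mul] at this
  rw [deg_eq, h, Finsupp.support_single_ne_zero i one_ne_zero, Finset.max_singleton]
  rfl

section WithF

variable {m : ℕ} {a : D} {f : R}
variable (hm : 1 < m) (haσ : σ a = a) (hf : f = S.t ^ m - S.ι a)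

include hm haσ hf

theorem coeff_f : S.coeff f = Finsupp.single m 1 - Finsupp.single 0 a := by
  rw [hf, coeff_sub, coeff_iota]
  congr 1
  have := coeff_mono S m (1 : D); rwa [map_one, one_mul] at this

theorem coeff_f_m : S.coeff f m = 1 := by
  rw [coeff_f S hm haσ hf, Finsupp.sub_apply, Finsupp.single_eq_same,
    Finsupp.single_eq_of_ne (by omega), sub_zero]

theorem f_ne_zero : f ≠ 0 := by
  intro h
  have := coeff_f_m S hm haσ hf
  rw [h, coeff_zero] at this
  simpa using this

theorem deg_f : S.deg f = (m : WithBot ℕ) := by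
  apply le_antisymm
  · rw [deg_eq]
    apply Finset.max_le
    intro j hj
    have hne := Finsupp.mem_support_iff.1 hj
    rw [coeff_f S hm haσ hf, Finsupp.sub_apply] at hne
    have hjm : j ≤ m := by
      by_contra h'
      rw [Finsupp.single_eq_of_ne (by omega), Finsupp.single_eq_of_ne (by omega),
        sub_zero] at hne
      exact hne rfl
    exact WithBot.coe_le_coe.2 hjm
  · have : m ∈ (S.coeff f).support :=
      Finsupp.mem_support_iff.2 (by rw [coeff_f_m S hm haσ hf]; exact one_ne_zero)
    exact Finset.le_max this

theorem sigma_iter_a (j : ℕ) : σ^[j] a = a := Function.iterate_fixed haσ j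

/-- key degree bound : a nonzero left multiple of `f` cannot have degree `< m`. -/
theorem qf_not_small (q : R) (hq : q ≠ 0) :
    ¬ (S.deg (q * f) < (m : WithBot ℕ)) := by
  intro hlt
  set cq := S.coeff q with hcq
  have hcqne : cq ≠ 0 := fun h => hq (by
    rw [← fromC_coeff S q, ← hcq, h, fromC_zero])
  have hsne : cq.support.Nonempty := Finsupp.support_nonempty_iff.2 hcqne
  set n := cq.support.max' hsne with hn
  have hnmem : n ∈ cq.support := Finset.max'_mem _ _
  have hub : ∀ j ∈ cq.support, j ≤ n := fun j hj => Finset.le_max' _ j hj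
  have h1 : S.coeff (q * S.t ^ m) = cq.sum fun i c => Finsupp.single (i + m) c := by
    conv_lhs => rw [← fromC_coeff S q, ← hcq]
    rw [fromC, Finsupp.sum_mul]
    rw [show (cq.sum fun i c => S.ι c * S.t ^ i * S.t ^ m) =
        cq.sum fun i c => S.ι c * S.t ^ (i + m) from
      Finsupp.sum_congr fun i _ => by rw [mul_assoc, ← pow_add]]
    exact coeff_trans S cq (· + m) (fun _ c => c)
  have h2 : S.coeff (q * S.ι a) = cq.sum fun i c => Finsupp.single i (c * a) := by
    conv_lhs => rw [← fromC_coeff S q, ← hcq]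
    rw [fromC, Finsupp.sum_mul]
    rw [show (cq.sum fun i c => S.ι c * S.t ^ i * S.ι a) =
        cq.sum fun i c => S.ι (c * a) * S.t ^ i from
      Finsupp.sum_congr fun i _ => by
        rw [mul_assoc, t_pow_mul, ← mul_assoc, ← map_mul, sigma_iter_a S hm haσ hf]]
    exact coeff_trans S cq (fun i => i) (fun _ c => c * a)
  have key : S.coeff (q * f) (n + m) = cq n := by
    rw [hf, mul_sub, coeff_sub, h1, h2, Finsupp.sub_apply,
      Finsupp.sum_apply, Finsupp.sum_apply]
    have e1 : (cq.sum fun i c => (Finsupp.single (i + m) c) (n + m)) = cq n := by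
      rw [Finsupp.sum]
      rw [Finset.sum_eq_single n]
      · exact Finsupp.single_eq_same
      · intro i _ hi
        exact Finsupp.single_eq_of_ne (by omega)
      · intro hnot
        rw [Finsupp.notMem_support_iff.1 hnot, Finsupp.single_zero,
          Finsupp.coe_zero, Pi.zero_apply]
    have e2 : (cq.sum fun i c => (Finsupp.single i (c * a)) (n + m)) = 0 := by
      rw [Finsupp.sum]
      apply Finset.sum_eq_zero
      intro i hi
      have := hub i hi
      exact Finsupp.single_eq_of_ne (by omega)
    rw [e1, e2, sub_zero]
  have hne : cq n ≠ 0 := Finsupp.mem_support_iff.1 hnmem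
  have hmem : n + m ∈ (S.coeff (q * f)).support :=
    Finsupp.mem_support_iff.2 (by rw [key]; exact hne)
  have hle : ((n + m : ℕ) : WithBot ℕ) ≤ S.deg (q * f) := Finset.le_max hmem
  have h2 : n + m < m := WithBot.coe_lt_coe.1 (lt_of_le_of_lt hle hlt)
  omega

theorem decomp_unique {q q' r r' : R} (hr : S.deg r < (m : WithBot ℕ))
    (hr' : S.deg r' < (m : WithBot ℕ)) (h : q * f + r = q' * f + r') :
    q = q' ∧ r = r' := by
  have h2 : (q - q') * f = r' - r := by
    rw [sub_mul, sub_eq_sub_iff_add_eq_add]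
    exact h.trans (add_comm _ _)
  have hq : q - q' = 0 := by
    by_contra hne
    exact qf_not_small S hm haσ hf _ hne (h2 ▸ deg_sub_lt S hr' hr)
  refine ⟨sub_eq_zero.1 hq, ?_⟩
  have : r' - r = 0 := by rw [← h2, hq, zero_mul]
  exact (sub_eq_zero.1 this).symm

theorem rmod_eq {g w : R} (hw : S.deg w < (m : WithBot ℕ))
    (h : ∃ q : R, g = q * f + w) : S.rmod g f = w := by
  obtain ⟨q, hq⟩ := h
  obtain ⟨⟨q', hq'⟩, hdeg⟩ := S.rmod_spec g f (f_ne_zero S hm haσ hf)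
  have hdeg' : S.deg (S.rmod g f) < (m : WithBot ℕ) := by
    have h3 : S.deg (S.rmod g f) < S.deg f := hdeg
    rwa [deg_f S hm haσ hf] at h3
  exact ((decomp_unique S hm haσ hf hw hdeg' (by rw [← hq, ← hq'])).2).symm

theorem rmod_small {w : R} (hw : S.deg w < (m : WithBot ℕ)) : S.rmod w f = w :=
  rmod_eq S hm haσ hf hw ⟨0, by rw [zero_mul, zero_add]⟩

theorem rmod_zero_iff (g : R) : S.rmod g f = 0 ↔ ∃ q : R, g = q * f := by
  constructor
  · intro h
    obtain ⟨⟨q, hq⟩, _⟩ := S.rmod_spec g f (f_ne_zero S hm haσ hf)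
    exact ⟨q, by rw [hq, h, add_zero]⟩
  · rintro ⟨q, rfl⟩
    exact rmod_eq S hm haσ hf (by rw [deg_zero]; exact WithBot.bot_lt_coe m)
      ⟨q, (add_zero _).symm⟩

theorem rmod_sub_qf (g q : R) : S.rmod (g - q * f) f = S.rmod g f := by
  obtain ⟨⟨q', hq'⟩, hdeg⟩ := S.rmod_spec g f (f_ne_zero S hm haσ hf)
  have hdeg' : S.deg (S.rmod g f) < (m : WithBot ℕ) := by
    have h3 : S.deg (S.rmod g f) < S.deg f := hdeg
    rwa [deg_f S hm haσ hf] at h3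
  refine rmod_eq S hm haσ hf hdeg' ⟨q' - q, ?_⟩
  conv_lhs => rw [hq']
  rw [sub_mul]
  abel

theorem rmod_add_qf (g q : R) : S.rmod (g + q * f) f = S.rmod g f := by
  have := rmod_sub_qf S hm haσ hf (g + q * f) q
  rw [add_sub_cancel_right] at this
  exact this.symm

theorem rmod_add (g h : R) : S.rmod (g + h) f = S.rmod g f + S.rmod h f := by
  obtain ⟨⟨qg, hqg⟩, hdg⟩ := S.rmod_spec g f (f_ne_zero S hm haσ hf)
  obtain ⟨⟨qh, hqh⟩, hdh⟩ := S.rmod_spec h f (f_ne_zero S hm haσ hf)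
  have hdg' : S.deg (S.rmod g f) < (m : WithBot ℕ) := by
    have h3 : S.deg (S.rmod g f) < S.deg f := hdg
    rwa [deg_f S hm haσ hf] at h3
  have hdh' : S.deg (S.rmod h f) < (m : WithBot ℕ) := by
    have h3 : S.deg (S.rmod h f) < S.deg f := hdh
    rwa [deg_f S hm haσ hf] at h3
  refine rmod_eq S hm haσ hf (deg_add_lt S hdg' hdh') ⟨qg + qh, ?_⟩
  conv_lhs => rw [hqg, hqh]
  rw [add_mul]
  abel

theorem f_t_pow_comm (i : ℕ) : f * S.t ^ i = S.t ^ i * f := by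
  rw [hf, sub_mul, mul_sub, t_pow_mul S i a, sigma_iter_a S hm haσ hf,
    pow_mul_comm]

theorem f_mul_iota (c : D) :
    f * S.ι c = S.ι (σ^[m] c) * f + S.ι (σ^[m] c * a - a * c) := by
  conv_lhs => rw [hf]
  rw [sub_mul, t_pow_mul S m c, ← map_mul]
  rw [hf, mul_sub, ← map_mul, map_sub S.ι]
  abel

theorem fx_decomp (x : R) :
    f * x = ((S.coeff x).sum fun i c => S.ι (σ^[m] c) * S.t ^ i) * f
      + fromC S ((S.coeff x).sum fun i c =>
          Finsupp.single i (σ^[m] c * a - a * c)) := by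
  conv_lhs => rw [← fromC_coeff S x]
  rw [fromC, Finsupp.mul_sum]
  rw [show ((S.coeff x).sum fun i c => f * (S.ι c * S.t ^ i)) =
      (S.coeff x).sum fun i c =>
        (S.ι (σ^[m] c) * S.t ^ i) * f + S.ι (σ^[m] c * a - a * c) * S.t ^ i from
    Finsupp.sum_congr fun i _ => by
      rw [← mul_assoc, f_mul_iota S hm haσ hf, add_mul,
        mul_assoc _ f (S.t ^ i), f_t_pow_comm S hm haσ hf, ← mul_assoc]]
  rw [Finsupp.sum_add, ← Finsupp.sum_mul, fromC_sum_single]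

theorem deg_w_lt {x : R} (hx : S.deg x < (m : WithBot ℕ)) :
    S.deg (fromC S ((S.coeff x).sum fun i c =>
      Finsupp.single i (σ^[m] c * a - a * c))) < (m : WithBot ℕ) := by
  apply deg_lt_of
  intro j hj
  rw [coeff_fromC] at hj
  have h1 := Finsupp.support_sum hj
  rw [Finset.mem_biUnion] at h1
  obtain ⟨i, hi, hji⟩ := h1
  have h2 := Finsupp.support_single_subset hji
  simp only [Finset.mem_singleton] at h2
  subst h2
  have h3 : (j : WithBot ℕ) ≤ S.deg x := Finset.le_max hi
  exact WithBot.coe_lt_coe.1 (lt_of_le_of_lt h3 hx)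

theorem rmod_fx {x : R} (hx : S.deg x < (m : WithBot ℕ)) :
    S.rmod (f * x) f = fromC S ((S.coeff x).sum fun i c =>
      Finsupp.single i (σ^[m] c * a - a * c)) :=
  rmod_eq S hm haσ hf (deg_w_lt S hm haσ hf hx) ⟨_, fx_decomp S hm haσ hf x⟩

theorem rmod_fx_zero_iff {x : R} (hx : S.deg x < (m : WithBot ℕ)) :
    S.rmod (f * x) f = 0 ↔
      ∀ j : ℕ, σ^[m] (S.coeff x j) * a - a * (S.coeff x j) = 0 := by
  rw [rmod_fx S hm haσ hf hx, fromC_eq_zero_iff]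
  have heval : ∀ j : ℕ, ((S.coeff x).sum fun i c =>
      Finsupp.single i (σ^[m] c * a - a * c)) j
      = σ^[m] (S.coeff x j) * a - a * (S.coeff x j) := by
    intro j
    rw [Finsupp.sum_apply, Finsupp.sum]
    rw [Finset.sum_eq_single j]
    · exact Finsupp.single_eq_same
    · intro i _ hij
      exact Finsupp.single_eq_of_ne' hij
    · intro hnot
      rw [Finsupp.notMem_support_iff.1 hnot]
      simp
  constructor
  · intro h j
    rw [← heval j, h]
    simp
  · intro h
    ext j
    rw [heval j, h j]
    simp

theorem nuc_of_rdvd {x : R} (hx : S.deg x < (m : WithBot ℕ))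
    (hfx : ∃ p : R, f * x = p * f) : x ∈ S.NucR f := by
  obtain ⟨p, hp⟩ := hfx
  refine ⟨?_, ?_⟩
  · show S.deg x < S.deg f
    rw [deg_f S hm haσ hf]; exact hx
  · intro g _ h _
    show S.rmod (S.rmod (g * h) f * x) f = S.rmod (g * S.rmod (h * x) f) f
    obtain ⟨⟨q, hq⟩, _⟩ := S.rmod_spec (g * h) f (f_ne_zero S hm haσ hf)
    have e1 : S.rmod (g * h) f * x = g * (h * x) - (q * p) * f := by
      have h2 : S.rmod (g * h) f = g * h - q * f := eq_sub_of_add_eq' hq.symm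
      rw [h2, sub_mul, mul_assoc g h x, mul_assoc q f x, hp, ← mul_assoc q p f]
    obtain ⟨⟨q₂, hq₂⟩, _⟩ := S.rmod_spec (h * x) f (f_ne_zero S hm haσ hf)
    have e2 : g * S.rmod (h * x) f = g * (h * x) - (g * q₂) * f := by
      have h3 : S.rmod (h * x) f = h * x - q₂ * f := eq_sub_of_add_eq' hq₂.symm
      rw [h3, mul_sub, ← mul_assoc g q₂ f]
    rw [e1, e2, rmod_sub_qf S hm haσ hf, rmod_sub_qf S hm haσ hf]

theorem rdvd_of_nuc {x : R} (hx : x ∈ S.NucR f) : S.rmod (f * x) f = 0 := by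
  obtain ⟨hxc, hass⟩ := hx
  have hfd := deg_f S hm haσ hf
  have htc : S.t ∈ S.carr f := by
    show S.deg S.t < S.deg f
    rw [hfd, ← pow_one S.t, deg_tpow]
    exact WithBot.coe_lt_coe.2 hm
  have htm : S.t ^ (m - 1) ∈ S.carr f := by
    show S.deg (S.t ^ (m - 1)) < S.deg f
    rw [hfd, deg_tpow]
    exact WithBot.coe_lt_coe.2 (show m - 1 < m by omega)
  have h := hass S.t htc (S.t ^ (m - 1)) htm
  have htm' : S.t * S.t ^ (m - 1) = f + S.ι a := by
    rw [hf, ← pow_succ', show m - 1 + 1 = m by omega, sub_add_cancel]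
  have e1 : S.pmul f S.t (S.t ^ (m - 1)) = S.ι a := by
    show S.rmod (S.t * S.t ^ (m - 1)) f = S.ι a
    rw [htm', show f + S.ι a = S.ι a + 1 * f by rw [one_mul, add_comm]]
    rw [rmod_add_qf S hm haσ hf,
      rmod_small S hm haσ hf (deg_iota_lt S (by omega) a)]
  rw [e1] at h
  obtain ⟨⟨q, hq⟩, _⟩ := S.rmod_spec (S.t ^ (m - 1) * x) f (f_ne_zero S hm haσ hf)
  have e2 : S.t * S.rmod (S.t ^ (m - 1) * x) f
      = (S.ι a * x + f * x) - (S.t * q) * f := by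
    have h3 : S.rmod (S.t ^ (m - 1) * x) f = S.t ^ (m - 1) * x - q * f :=
      eq_sub_of_add_eq' hq.symm
    rw [h3, mul_sub, ← mul_assoc S.t (S.t ^ (m - 1)) x, htm', add_mul,
      ← mul_assoc S.t q f, add_comm (f * x) (S.ι a * x)]
  have h4 : S.rmod (S.ι a * x) f
      = S.rmod (S.t * S.rmod (S.t ^ (m - 1) * x) f) f := h
  rw [e2, rmod_sub_qf S hm haσ hf, rmod_add S hm haσ hf] at h4
  exact (left_eq_add.1 h4)

end WithF

end PetitAux

end PetitAux

theorem statement_16 (D R : Type) [DivisionRing D] [Ring R]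
    (σ : D →+* D) (hσinj : Function.Injective ⇑σ)
    (S : SkewPolyData D σ (fun _ => 0) R)
    (m : ℕ) (hm : 1 < m) (a : D)
    (ha : a ∈ Set.center D ∧ σ a = a)
    (f : R) (hf : f = S.t ^ m - S.ι a)
    (L : Set D) (hL : L = {x : D | S.ι x ∈ S.NucR f}) :
    S.NucR f = {x : R | S.deg x < S.deg f ∧ ∀ i : ℕ, S.coeff x i ∈ L} := by
  subst hL
  have haσ := ha.2
  have hfd := PetitAux.deg_f S hm haσ hf
  ext x
  simp only [Set.mem_setOf_eq]
  constructor
  · intro hx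
    have hxd : S.deg x < S.deg f := hx.1
    have hxd' : S.deg x < (m : WithBot ℕ) := by rwa [hfd] at hxd
    refine ⟨hxd, ?_⟩
    intro i
    have h0 := PetitAux.rdvd_of_nuc S hm haσ hf hx
    have h1 := (PetitAux.rmod_fx_zero_iff S hm haσ hf hxd').1 h0 i
    show S.ι (S.coeff x i) ∈ S.NucR f
    apply PetitAux.nuc_of_rdvd S hm haσ hf (PetitAux.deg_iota_lt S (by omega) _)
    refine ⟨S.ι (σ^[m] (S.coeff x i)), ?_⟩
    rw [PetitAux.f_mul_iota S hm haσ hf, h1, map_zero, add_zero]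
  · rintro ⟨hxd, hco⟩
    have hxd' : S.deg x < (m : WithBot ℕ) := by rwa [hfd] at hxd
    apply PetitAux.nuc_of_rdvd S hm haσ hf hxd'
    rw [← PetitAux.rmod_zero_iff S hm haσ hf]
    apply (PetitAux.rmod_fx_zero_iff S hm haσ hf hxd').2
    intro j
    have hj : S.ι (S.coeff x j) ∈ S.NucR f := hco j
    have h0 := PetitAux.rdvd_of_nuc S hm haσ hf hj
    have h1 := (PetitAux.rmod_fx_zero_iff S hm haσ hf
      (PetitAux.deg_iota_lt S (by omega) _)).1 h0 0
    rwa [PetitAux.coeff_iota, Finsupp.single_eq_same] at h1
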